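/- Let Q be a symmetric n×n matrix and b ∈ R^n. If y* ∈ R^n and μ > 0 satisfy (Q + μI)y* + b = 0, ‖y*‖ = 1, vᵀ(Q+μI)v > 0 for all nonzero v with vᵀy* = 0, and Q + μI is not positive semidefinite, then y* is a strict local minimizer of y ↦ yᵀQy + 2bᵀy over {y : ‖y‖ ≤ 1} that is not a global minimizer. -/

import Mathlib

open Matrix RealInnerProductSpace

lemma aux_symm {n : ℕ} {M : Matrix (Fin n) (Fin n) ℝ} (hM : Mᵀ = M) (v w : Fin n → ℝ) :
    v ⬝ᵥ M.mulVec w = w ⬝ᵥ M.mulVec v := by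
  rw [Matrix.dotProduct_mulVec, ← Matrix.mulVec_transpose, hM, dotProduct_comm]

lemma aux_smul_left {n : ℕ} (M : Matrix (Fin n) (Fin n) ℝ) (c : ℝ) (x z : Fin n → ℝ) :
    (c • x) ⬝ᵥ M.mulVec z = c * (x ⬝ᵥ M.mulVec z) := by
  rw [smul_dotProduct]; rfl

lemma aux_smul_right {n : ℕ} (M : Matrix (Fin n) (Fin n) ℝ) (c : ℝ) (x z : Fin n → ℝ) :
    x ⬝ᵥ M.mulVec (c • z) = c * (x ⬝ᵥ M.mulVec z) := by
  rw [Matrix.mulVec_smul, dotProduct_smul]; rfl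

lemma aux_add {n : ℕ} {M : Matrix (Fin n) (Fin n) ℝ} (hM : Mᵀ = M) (x z : Fin n → ℝ) :
    (x + z) ⬝ᵥ M.mulVec (x + z) =
      x ⬝ᵥ M.mulVec x + 2 * (x ⬝ᵥ M.mulVec z) + z ⬝ᵥ M.mulVec z := by
  rw [Matrix.mulVec_add, dotProduct_add, add_dotProduct, add_dotProduct,
    aux_symm hM z x]
  ring

lemma aux_sub {n : ℕ} {M : Matrix (Fin n) (Fin n) ℝ} (hM : Mᵀ = M) (x z : Fin n → ℝ) :
    (x - z) ⬝ᵥ M.mulVec (x - z) =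
      x ⬝ᵥ M.mulVec x - 2 * (x ⬝ᵥ M.mulVec z) + z ⬝ᵥ M.mulVec z := by
  rw [Matrix.mulVec_sub, dotProduct_sub, sub_dotProduct, sub_dotProduct,
    aux_symm hM z x]
  ring

lemma aux_inner {n : ℕ} (x y : EuclideanSpace ℝ (Fin n)) : ⟪x, y⟫ = ∑ i, x i * y i := by
  simp [PiLp.inner_apply, RCLike.inner_apply, mul_comm]

lemma aux_norm_sq {n : ℕ} (x : EuclideanSpace ℝ (Fin n)) : (∑ i, x i * x i) = ‖x‖ ^ 2 := by
  rw [← aux_inner, real_inner_self_eq_norm_sq]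

lemma aux_cont {n : ℕ} (M : Matrix (Fin n) (Fin n) ℝ) :
    Continuous (fun w : EuclideanSpace ℝ (Fin n) => (fun i => w i) ⬝ᵥ M.mulVec (fun i => w i)) := by
  simp only [dotProduct, Matrix.mulVec]
  fun_prop

lemma aux_coercive {n : ℕ} {M : Matrix (Fin n) (Fin n) ℝ} (ys : EuclideanSpace ℝ (Fin n))
    (hpos : ∀ v : Fin n → ℝ, v ≠ 0 → (∑ i, v i * ys i) = 0 → 0 < v ⬝ᵥ M.mulVec v) :
    ∃ c > 0, ∀ w : EuclideanSpace ℝ (Fin n), (∑ i, w i * ys i) = 0 →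
      c * ‖w‖ ^ 2 ≤ (fun i => w i) ⬝ᵥ M.mulVec (fun i => w i) := by
  classical
  set f : EuclideanSpace ℝ (Fin n) → ℝ :=
    fun w => (fun i => w i) ⬝ᵥ M.mulVec (fun i => w i) with hf
  have hfc : Continuous f := aux_cont M
  have happ : ∀ (a : ℝ) (w : EuclideanSpace ℝ (Fin n)),
      (fun i => (a • w) i) = a • (fun i => w i) := by
    intro a w; funext i; simp
  have hhom : ∀ (a : ℝ) (w : EuclideanSpace ℝ (Fin n)), f (a • w) = a ^ 2 * f w := by
    intro a w
    simp only [hf, happ, aux_smul_left, aux_smul_right]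
    ring
  have hne : ∀ w : EuclideanSpace ℝ (Fin n), w ≠ 0 → (fun i => w i) ≠ 0 := by
    intro w hw h
    apply hw
    ext i
    exact congrFun h i
  set S : Set (EuclideanSpace ℝ (Fin n)) :=
    Metric.sphere 0 1 ∩ {w | (∑ i, w i * ys i) = 0} with hS
  have hScomp : IsCompact S := by
    apply (isCompact_sphere (0 : EuclideanSpace ℝ (Fin n)) 1).inter_right
    exact isClosed_eq (by fun_prop) continuous_const
  rcases S.eq_empty_or_nonempty with hSe | hSne
  · refine ⟨1, one_pos, fun w hw => ?_⟩
    rcases eq_or_ne w 0 with h0 | h0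
    · subst h0; simp [hf]
    · exfalso
      have : (‖w‖⁻¹ • w) ∈ S := by
        constructor
        · simp [norm_smul, norm_ne_zero_iff.2 h0]
        · simp only [Set.mem_setOf_eq, PiLp.smul_apply, smul_eq_mul]
          simp only [mul_assoc, ← Finset.mul_sum]
          rw [hw, mul_zero]
      rw [hSe] at this; exact this
  · obtain ⟨w₀, hw₀S, hw₀min⟩ := hScomp.exists_isMinOn hSne hfc.continuousOn
    have hw₀n : ‖w₀‖ = 1 := by simpa using hw₀S.1
    have hw₀p : 0 < f w₀ := by
      apply hpos
      · apply hne
        intro h; rw [h] at hw₀n; simp at hw₀n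
      · exact hw₀S.2
    refine ⟨f w₀, hw₀p, fun w hw => ?_⟩
    rcases eq_or_ne w 0 with h0 | h0
    · subst h0; simp [hf]
    · have hwn : (0:ℝ) < ‖w‖ := norm_pos_iff.2 h0
      have hmem : (‖w‖⁻¹ • w) ∈ S := by
        constructor
        · simp [norm_smul, hwn.ne']
        · simp only [Set.mem_setOf_eq, PiLp.smul_apply, smul_eq_mul]
          simp only [mul_assoc, ← Finset.mul_sum]
          rw [hw, mul_zero]
      have hle : f w₀ ≤ f (‖w‖⁻¹ • w) := hw₀min hmem
      have h2 : f (‖w‖⁻¹ • w) = ‖w‖⁻¹ ^ 2 * f w := hhom _ w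
      rw [h2] at hle
      have h3 : f w₀ * ‖w‖ ^ 2 ≤ ‖w‖⁻¹ ^ 2 * f w * ‖w‖ ^ 2 :=
        mul_le_mul_of_nonneg_right hle (sq_nonneg _)
      show f w₀ * ‖w‖ ^ 2 ≤ f w
      calc f w₀ * ‖w‖ ^ 2 ≤ ‖w‖⁻¹ ^ 2 * f w * ‖w‖ ^ 2 := h3
        _ = f w := by field_simp

/-- The trust region subproblem objective `yᵀQy + 2bᵀy`. -/
noncomputable def trsObj {n : ℕ} (Q : Matrix (Fin n) (Fin n) ℝ) (b : Fin n → ℝ)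
    (y : EuclideanSpace ℝ (Fin n)) : ℝ :=
  (∑ i, ∑ j, Q i j * y i * y j) + 2 * ∑ i, b i * y i

lemma aux_identity {n : ℕ} (Q : Matrix (Fin n) (Fin n) ℝ) (hQ : Qᵀ = Q) (b : Fin n → ℝ)
    (ys : EuclideanSpace ℝ (Fin n)) (μ : ℝ)
    (hstat : (Q + μ • (1 : Matrix (Fin n) (Fin n) ℝ)).mulVec (fun i => ys i) + b = 0)
    (hnorm : ‖ys‖ = 1) (y : EuclideanSpace ℝ (Fin n)) :
    trsObj Q b y = trsObj Q b ys +
      (((fun i => y i) - fun i => ys i) ⬝ᵥ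
        (Q + μ • (1 : Matrix (Fin n) (Fin n) ℝ)).mulVec ((fun i => y i) - fun i => ys i)) +
      μ * (1 - ‖y‖ ^ 2) := by
  set M := Q + μ • (1 : Matrix (Fin n) (Fin n) ℝ) with hM
  have hMsym : Mᵀ = M := by
    rw [hM, Matrix.transpose_add, hQ, Matrix.transpose_smul, Matrix.transpose_one]
  have hb : b = -(M.mulVec (fun i => ys i)) := eq_neg_of_add_eq_zero_right hstat
  have hMz : ∀ z : Fin n → ℝ, M.mulVec z = Q.mulVec z + μ • z := by
    intro z
    rw [hM, Matrix.add_mulVec, Matrix.smul_mulVec, Matrix.one_mulVec]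
  have htrs : ∀ z : EuclideanSpace ℝ (Fin n),
      trsObj Q b z = (fun i => z i) ⬝ᵥ M.mulVec (fun i => z i) - μ * ‖z‖ ^ 2
        + 2 * (b ⬝ᵥ fun i => z i) := by
    intro z
    have h1 : (∑ i, ∑ j, Q i j * z i * z j) = (fun i => z i) ⬝ᵥ Q.mulVec (fun i => z i) := by
      simp only [dotProduct, Matrix.mulVec, Finset.mul_sum]
      exact Finset.sum_congr rfl fun i _ => Finset.sum_congr rfl fun j _ => by ring
    have h2 : (fun i => z i) ⬝ᵥ M.mulVec (fun i => z i)
        = (fun i => z i) ⬝ᵥ Q.mulVec (fun i => z i) + μ * ‖z‖ ^ 2 := by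
      rw [hMz, dotProduct_add, dotProduct_smul, smul_eq_mul, ← aux_norm_sq z]
      rfl
    have h3 : (∑ i, b i * z i) = b ⬝ᵥ fun i => z i := rfl
    rw [trsObj, h1, h3, h2]; ring
  have hbz : ∀ z : EuclideanSpace ℝ (Fin n),
      (b ⬝ᵥ fun i => z i) = -((fun i => ys i) ⬝ᵥ M.mulVec (fun i => z i)) := by
    intro z
    rw [hb, neg_dotProduct, dotProduct_comm, aux_symm hMsym]
  have hexp := aux_sub hMsym (fun i => y i) (fun i => ys i)
  rw [htrs y, htrs ys, hexp, hbz y, hbz ys, aux_symm hMsym (fun i => ys i) (fun i => y i),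
    hnorm]
  ring


lemma aux_arith (c μ D C ε t r u β γ : ℝ)
    (hc : 0 < c) (hμ : 0 < μ) (hC0 : 0 ≤ C) (hr0 : 0 ≤ r) (hεpos : 0 < ε)
    (hθc : ε * (|D - μ| / 2 + C) ≤ c / 2) (hθμ : ε * (|D - μ| / 2 + C) ≤ μ / 2)
    (hγc : c * r ^ 2 ≤ γ) (hβ : |β| ≤ C * r)
    (htneg : t < 0) (htε : -t < ε) (hrε : r < ε)
    (hu : u = -2 * t - r ^ 2) (hut : t ^ 2 ≤ u) :
    0 < t ^ 2 * D + 2 * t * β + γ + μ * (u - t ^ 2) := by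
  have htsq : 0 < t ^ 2 := by nlinarith
  have hu0 : 0 < u := lt_of_lt_of_le htsq hut
  have hmt : -t = (u + r ^ 2) / 2 := by rw [hu]; ring
  have habs1 : D - μ ≤ |D - μ| := le_abs_self _
  have habs2 : -(|D - μ|) ≤ D - μ := neg_abs_le _
  have hβ1 : β ≤ C * r := le_of_abs_le hβ
  have hβ2 : -(C * r) ≤ β := (abs_le.1 hβ).1
  have hab0 : 0 ≤ |D - μ| := abs_nonneg _
  have h0 : 0 ≤ u + r ^ 2 := by positivity
  have hstep1 : -(|D - μ| * ε * ((u + r ^ 2) / 2)) ≤ t ^ 2 * (D - μ) := by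
    have h1 : t ^ 2 ≤ ε * ((u + r ^ 2) / 2) := by
      have h2 : t ^ 2 = (-t) * (-t) := by ring
      rw [h2, hmt]
      have h3 : 0 ≤ (u + r ^ 2) / 2 := by positivity
      nlinarith
    nlinarith [sq_nonneg t]
  have hstep2 : -(C * r * (u + r ^ 2)) ≤ 2 * t * β := by
    have h1 : (-t) * β ≤ (-t) * (C * r) := mul_le_mul_of_nonneg_left hβ1 (by linarith)
    nlinarith
  have hstep3 : C * r * (u + r ^ 2) ≤ C * ε * (u + r ^ 2) :=
    mul_le_mul_of_nonneg_right (mul_le_mul_of_nonneg_left (le_of_lt hrε) hC0) h0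
  have hθu : (ε * (|D - μ| / 2 + C)) * (u + r ^ 2) ≤ (μ / 2) * u + (c / 2) * r ^ 2 := by
    have h1 : (ε * (|D - μ| / 2 + C)) * u ≤ (μ / 2) * u :=
      mul_le_mul_of_nonneg_right hθμ (le_of_lt hu0)
    have h2 : (ε * (|D - μ| / 2 + C)) * r ^ 2 ≤ (c / 2) * r ^ 2 :=
      mul_le_mul_of_nonneg_right hθc (sq_nonneg r)
    nlinarith
  have hsum : |D - μ| * ε * ((u + r ^ 2) / 2) + C * ε * (u + r ^ 2)
      = (ε * (|D - μ| / 2 + C)) * (u + r ^ 2) := by ring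
  have hexp : t ^ 2 * D + 2 * t * β + γ + μ * (u - t ^ 2)
      = t ^ 2 * (D - μ) + 2 * t * β + γ + μ * u := by ring
  rw [hexp]
  have hcr : 0 ≤ (c / 2) * r ^ 2 := by positivity
  have hμt : (μ / 2) * t ^ 2 ≤ (μ / 2) * u := mul_le_mul_of_nonneg_left hut (by positivity)
  have hμtpos : 0 < (μ / 2) * t ^ 2 := by positivity
  have e1 : (c / 2) * r ^ 2 + (c / 2) * r ^ 2 = c * r ^ 2 := by ring
  have e2 : (μ / 2) * u + (μ / 2) * u = μ * u := by ring
  linarith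

set_option maxHeartbeats 1000000 in
theorem stmt15 {n : ℕ} (Q : Matrix (Fin n) (Fin n) ℝ) (hQ : Qᵀ = Q) (b : Fin n → ℝ)
    (ys : EuclideanSpace ℝ (Fin n)) (μ : ℝ) (hμ : 0 < μ)
    (hstat : (Q + μ • (1 : Matrix (Fin n) (Fin n) ℝ)).mulVec (fun i => ys i) + b = 0)
    (hnorm : ‖ys‖ = 1)
    (hsos : ∀ v : Fin n → ℝ, v ≠ 0 → (∑ i, v i * ys i) = 0 →
      0 < v ⬝ᵥ (Q + μ • (1 : Matrix (Fin n) (Fin n) ℝ)).mulVec v)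
    (hnpsd : ¬ ∀ v : Fin n → ℝ, 0 ≤ v ⬝ᵥ (Q + μ • (1 : Matrix (Fin n) (Fin n) ℝ)).mulVec v) :
    (∃ ε > 0, ∀ y : EuclideanSpace ℝ (Fin n), ‖y‖ ≤ 1 → y ≠ ys → ‖y - ys‖ < ε →
      trsObj Q b ys < trsObj Q b y) ∧
    ¬ (∀ y : EuclideanSpace ℝ (Fin n), ‖y‖ ≤ 1 → trsObj Q b ys ≤ trsObj Q b y) := by
  classical
  set M := Q + μ • (1 : Matrix (Fin n) (Fin n) ℝ) with hM
  have hMsym : Mᵀ = M := by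
    rw [hM, Matrix.transpose_add, hQ, Matrix.transpose_smul, Matrix.transpose_one]
  have hys1 : ⟪ys, ys⟫ = 1 := by
    rw [real_inner_self_eq_norm_sq, hnorm]; norm_num
  constructor
  · -- strict local minimizer
    obtain ⟨c, hc, hcoer⟩ := aux_coercive ys hsos
    set ysf : Fin n → ℝ := fun i => ys i with hysf
    set D : ℝ := ysf ⬝ᵥ M.mulVec ysf with hD
    set me : EuclideanSpace ℝ (Fin n) := (WithLp.equiv 2 (Fin n → ℝ)).symm (M.vecMul ysf)
      with hme
    set C : ℝ := ‖me‖ with hC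
    have hC0 : 0 ≤ C := norm_nonneg _
    set K : ℝ := |D - μ| / 2 + C + 1 with hK
    have hK0 : 0 < K := by positivity
    have hminpos : 0 < min c μ := lt_min hc hμ
    refine ⟨min c μ / (2 * K), by positivity, fun y hy1 hne hdist => ?_⟩
    set ε : ℝ := min c μ / (2 * K) with hε
    have hεK : ε * K = min c μ / 2 := by
      rw [hε]; field_simp
    have hθc : ε * (|D - μ| / 2 + C) ≤ c / 2 := by
      have h1 : ε * (|D - μ| / 2 + C) ≤ ε * K := by
        apply mul_le_mul_of_nonneg_left _ (le_of_lt (by positivity))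
        rw [hK]; linarith
      have h2 : min c μ / 2 ≤ c / 2 := by
        have := min_le_left c μ; linarith
      linarith [hεK ▸ h1]
    have hθμ : ε * (|D - μ| / 2 + C) ≤ μ / 2 := by
      have h1 : ε * (|D - μ| / 2 + C) ≤ ε * K := by
        apply mul_le_mul_of_nonneg_left _ (le_of_lt (by positivity))
        rw [hK]; linarith
      have h2 : min c μ / 2 ≤ μ / 2 := by
        have := min_le_right c μ; linarith
      linarith [hεK ▸ h1]
    -- decompose d = y - ys
    set t : ℝ := ⟪y - ys, ys⟫ with ht
    set w : EuclideanSpace ℝ (Fin n) := (y - ys) - t • ys with hw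
    set r : ℝ := ‖w‖ with hr
    have hr0 : 0 ≤ r := norm_nonneg _
    have hwys : ⟪w, ys⟫ = 0 := by
      rw [hw, inner_sub_left, real_inner_smul_left, hys1, ← ht]; ring
    have hysw : ⟪ys, w⟫ = 0 := by rw [real_inner_comm]; exact hwys
    have hdeq : y - ys = t • ys + w := by rw [hw]; abel
    -- Pythagoras
    have hpyth : ‖y - ys‖ ^ 2 = t ^ 2 + r ^ 2 := by
      rw [hdeq, norm_add_sq_real, real_inner_smul_left, hysw, norm_smul, hnorm]
      simp [mul_pow, sq_abs]
      rfl
    have hdn : ‖y - ys‖ < ε := hdist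
    have hdn0 : 0 ≤ ‖y - ys‖ := norm_nonneg _
    have htabs : |t| ≤ ‖y - ys‖ := by
      have := abs_real_inner_le_norm (y - ys) ys
      rwa [hnorm, mul_one] at this
    have hrd : r ≤ ‖y - ys‖ := by
      nlinarith [sq_nonneg t]
    have hyn : ‖y‖ ^ 2 = 1 + 2 * t + (t ^ 2 + r ^ 2) := by
      have hy : y = ys + (y - ys) := by abel
      rw [hy, norm_add_sq_real, real_inner_comm, ← ht, hpyth]
      rw [hnorm]; ring
    have hyle : ‖y‖ ^ 2 ≤ 1 := by
      calc ‖y‖ ^ 2 ≤ 1 ^ 2 := pow_le_pow_left₀ (norm_nonneg y) hy1 2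
        _ = 1 := one_pow 2
    have ht0 : t ≤ 0 := by linarith [sq_nonneg t, sq_nonneg r]
    have htne : t ≠ 0 := by
      intro h0
      apply hne
      have h1 : r ^ 2 ≤ 0 := by rw [h0] at hyn; linarith
      have h2 : ‖y - ys‖ ^ 2 = 0 := by
        rw [hpyth, h0]
        have := sq_nonneg r
        linarith
      have hd0 : ‖y - ys‖ = 0 := by
        have := sq_eq_zero_iff.1 h2
        exact this
      have := norm_eq_zero.1 hd0
      rw [sub_eq_zero] at this; exact this
    have htneg : t < 0 := lt_of_le_of_ne ht0 htne
    have htε : -t < ε := by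
      rw [abs_of_nonpos ht0] at htabs; linarith
    -- bilinear form expansion
    set wf : Fin n → ℝ := fun i => w i with hwf
    set β : ℝ := ysf ⬝ᵥ M.mulVec wf with hβ
    set γ : ℝ := wf ⬝ᵥ M.mulVec wf with hγ
    have hγc : c * r ^ 2 ≤ γ := hcoer w (by rw [← aux_inner]; exact hwys)
    have hβC : |β| ≤ C * r := by
      have h1 : β = ⟪me, w⟫ := by
        rw [hβ, Matrix.dotProduct_mulVec, aux_inner]
        rfl
      rw [h1, hC, hr]
      exact abs_real_inner_le_norm me w
    have hdfun : ((fun i => y i) - fun i => ys i) = t • ysf + wf := by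
      funext i
      have := congrFun (congrArg (fun (z : EuclideanSpace ℝ (Fin n)) => (fun j => z j)) hdeq) i
      simpa [hysf, hwf] using this
    have hGdd : ((fun i => y i) - fun i => ys i) ⬝ᵥ
        M.mulVec ((fun i => y i) - fun i => ys i) = t ^ 2 * D + 2 * t * β + γ := by
      rw [hdfun, aux_add hMsym, aux_smul_left, aux_smul_left, aux_smul_right, hD, hβ, hγ]
      ring
    -- main estimate
    have hkey : 0 < t ^ 2 * D + 2 * t * β + γ + μ * (1 - ‖y‖ ^ 2) := by
      have hs : 1 - ‖y‖ ^ 2 = (-2 * t - r ^ 2) - t ^ 2 := by rw [hyn]; ring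
      have hεpos : 0 < ε := by rw [hε]; positivity
      have hut : t ^ 2 ≤ -2 * t - r ^ 2 := by linarith
      rw [hs]
      exact aux_arith c μ D C ε t r (-2 * t - r ^ 2) β γ hc hμ hC0 hr0 hεpos hθc hθμ
        hγc hβC htneg htε (lt_of_le_of_lt hrd hdn) rfl hut
    rw [aux_identity Q hQ b ys μ hstat hnorm y, ← hM, hGdd]
    linarith
  · -- not a global minimizer
    push_neg at hnpsd
    obtain ⟨v, hv⟩ := hnpsd

    have hv0 : v ≠ 0 := by
      intro h
      rw [h, zero_dotProduct] at hv
      exact lt_irrefl 0 hv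
    have hip : (∑ i, v i * ys i) ≠ 0 := by
      intro h
      have := hsos v hv0 h
      linarith
    set ip : ℝ := ∑ i, v i * ys i with hipdef
    set nv : ℝ := ∑ i, v i * v i with hnv
    have hnv0 : 0 < nv := by
      obtain ⟨i, hi⟩ := Function.ne_iff.1 hv0
      have h1 : v i * v i ≤ nv := by
        apply Finset.single_le_sum (f := fun j => v j * v j) _ (Finset.mem_univ i)
        intro j _; exact mul_self_nonneg _
      have h2 : 0 < v i * v i := by
        rcases lt_or_gt_of_ne (show v i ≠ 0 from hi) with h | h
        · nlinarith
        · nlinarith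
      linarith
    set τ : ℝ := -2 * ip / nv with hτ
    have hτ0 : τ ≠ 0 := by
      rw [hτ]
      exact div_ne_zero (by simpa using hip) (ne_of_gt hnv0)
    set ve : EuclideanSpace ℝ (Fin n) := (WithLp.equiv 2 (Fin n → ℝ)).symm v with hve
    have hveapp : ∀ i, ve i = v i := fun i => rfl
    set y : EuclideanSpace ℝ (Fin n) := ys + τ • ve with hy
    have hyapp : ∀ i, y i = ys i + τ * v i := by
      intro i; rw [hy]; simp [hveapp]
    have hyn2 : ‖y‖ ^ 2 = 1 := by
      rw [← aux_norm_sq]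
      have hterm : ∀ i, y i * y i
          = ys i * ys i + (2 * τ) * (v i * ys i) + (τ ^ 2) * (v i * v i) := by
        intro i; rw [hyapp]; ring
      rw [Finset.sum_congr rfl fun i _ => hterm i]
      rw [Finset.sum_add_distrib, Finset.sum_add_distrib, ← Finset.mul_sum, ← Finset.mul_sum]
      rw [aux_norm_sq ys, hnorm, ← hipdef, ← hnv, hτ]
      field_simp
      ring
    have hyn1 : ‖y‖ = 1 := by
      rw [← Real.sqrt_sq (norm_nonneg y), hyn2, Real.sqrt_one]
    have hdfun : ((fun i => y i) - fun i => ys i) = τ • v := by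
      funext i
      simp [hyapp i]
    have hval : trsObj Q b y = trsObj Q b ys + τ ^ 2 * (v ⬝ᵥ M.mulVec v) := by
      rw [aux_identity Q hQ b ys μ hstat hnorm y, ← hM, hdfun, aux_smul_left, aux_smul_right,
        hyn2]
      ring
    intro hglob
    have h1 := hglob y (le_of_eq hyn1)
    have h2 : 0 < τ ^ 2 := by positivity
    nlinarith
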